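/- For every measurable g : 𝒱 → ℝ such that the displayed random variables are integrable, E[w·(φ − (Y¹−Y⁰))·g(V)] = 0. -/

import Mathlib

open MeasureTheory ProbabilityTheory

/-- The weight `w = (A − π(X))·λ'(π(X)) + λ(π(X))`. -/
noncomputable def wFun {Ω 𝓧 : Type*} (lam lam' : ℝ → ℝ) (A : Ω → ℝ) (X : Ω → 𝓧)
    (p : 𝓧 → ℝ) (ω : Ω) : ℝ :=
  (A ω - p (X ω)) * lam' (p (X ω)) + lam (p (X ω))

/-- The pseudo-outcome
`φ = (λ(π(X))/w)·[(A/π(X))(Y − Q¹(X)) − ((1−A)/(1−π(X)))(Y − Q⁰(X))] + Q¹(X) − Q⁰(X)`. -/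
noncomputable def phiFun {Ω 𝓧 : Type*} (lam lam' : ℝ → ℝ) (A Y : Ω → ℝ) (X : Ω → 𝓧)
    (p q0 q1 : 𝓧 → ℝ) (ω : Ω) : ℝ :=
  lam (p (X ω)) / wFun lam lam' A X p ω *
      (A ω / p (X ω) * (Y ω - q1 (X ω)) - (1 - A ω) / (1 - p (X ω)) * (Y ω - q0 (X ω)))
    + q1 (X ω) - q0 (X ω)

/-- Key pointwise algebraic identity. -/
lemma stmt12_alg (a p L L' q0 q1 y0 y1 G : ℝ) (ha : a = 0 ∨ a = 1)
    (hp0 : p ≠ 0) (hp1 : 1 - p ≠ 0) (hw : (a - p) * L' + L ≠ 0) :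
    ((a - p) * L' + L) *
        ((L / ((a - p) * L' + L) *
            (a / p * ((a * y1 + (1 - a) * y0) - q1)
              - (1 - a) / (1 - p) * ((a * y1 + (1 - a) * y0) - q0)) + q1 - q0)
          - (y1 - y0)) * G
      = G * ((L / p - L') * y1 + (L / (1 - p) + L') * y0
          + (-(L * q1) / p - L * q0 / (1 - p) + L' * (q1 - q0))) * (a - p) := by
  set w := (a - p) * L' + L with hwdef
  have key : ∀ T : ℝ, w * ((L / w * T + q1 - q0) - (y1 - y0)) * G
      = (L * T + w * (q1 - q0 - (y1 - y0))) * G := by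
    intro T
    field_simp
    ring
  rw [key]
  rw [hwdef]
  rcases ha with h | h <;> subst h <;> field_simp <;> ring

/-- the weighted error of the pseudo-outcome relative to the individual
treatment effect is orthogonal to every measurable function of `V`:
`E[w·(φ − (Y¹−Y⁰))·g(V)] = 0`. -/
theorem stmt12 {Ω 𝓧 𝓥 : Type*} [MeasurableSpace Ω] [StandardBorelSpace Ω]
    [MeasurableSpace 𝓧] [MeasurableSpace 𝓥]
    (P : Measure Ω) [IsProbabilityMeasure P]
    (X : Ω → 𝓧) (hX : Measurable X) (v : 𝓧 → 𝓥) (hv : Measurable v)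
    (A Y0 Y1 Y : Ω → ℝ) (hA : Measurable A) (hY0 : Measurable Y0) (hY1 : Measurable Y1)
    (hA01 : ∀ ω, A ω = 0 ∨ A ω = 1)
    (hYdef : ∀ ω, Y ω = A ω * Y1 ω + (1 - A ω) * Y0 ω)
    (pr : 𝓧 → ℝ) (hprm : Measurable pr) (hpr : ∀ x, 0 < pr x ∧ pr x < 1)
    (hprCE : (fun ω => pr (X ω)) =ᵐ[P] P[A | MeasurableSpace.comap X inferInstance])
    (hCE : CondIndepFun (MeasurableSpace.comap X inferInstance) hX.comap_le
      (fun ω => (Y0 ω, Y1 ω)) A P)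
    (Q0 Q1 : 𝓧 → ℝ) (hQ0m : Measurable Q0) (hQ1m : Measurable Q1)
    (hQ1 : P[fun ω => A ω * (Y ω - Q1 (X ω)) | MeasurableSpace.comap X inferInstance]
      =ᵐ[P] fun _ => (0 : ℝ))
    (hQ0 : P[fun ω => (1 - A ω) * (Y ω - Q0 (X ω)) | MeasurableSpace.comap X inferInstance]
      =ᵐ[P] fun _ => (0 : ℝ))
    (lam lam' : ℝ → ℝ) (hlam : ∀ p, HasDerivAt lam (lam' p) p) (hlam' : Continuous lam')
    (hw : ∀ᵐ ω ∂P, wFun lam lam' A X pr ω ≠ 0)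
    (g : 𝓥 → ℝ) (hg : Measurable g)
    (hI : Integrable (fun ω => wFun lam lam' A X pr ω *
      (phiFun lam lam' A Y X pr Q0 Q1 ω - (Y1 ω - Y0 ω)) * g (v (X ω))) P) :
    ∫ ω, wFun lam lam' A X pr ω *
      (phiFun lam lam' A Y X pr Q0 Q1 ω - (Y1 ω - Y0 ω)) * g (v (X ω)) ∂P = 0 := by
  classical
  have hlamc : Continuous lam := by
    rw [continuous_iff_continuousAt]; exact fun p => (hlam p).continuousAt
  set W : Ω → ℝ × ℝ := fun ω => (Y0 ω, Y1 ω) with hW_def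
  have hWm : Measurable W := hY0.prodMk hY1
  set Z : Ω → 𝓧 × ℝ × ℝ := fun ω => (X ω, (Y0 ω, Y1 ω)) with hZ_def
  have hZm : Measurable Z := hX.prodMk hWm
  have hm : MeasurableSpace.comap X inferInstance ≤ ‹MeasurableSpace Ω› := hX.comap_le
  have hm2 : MeasurableSpace.comap Z inferInstance ≤ ‹MeasurableSpace Ω› := hZm.comap_le
  set k : 𝓧 × ℝ × ℝ → ℝ := fun q =>
    g (v q.1) * ((lam (pr q.1) / pr q.1 - lam' (pr q.1)) * q.2.2
      + (lam (pr q.1) / (1 - pr q.1) + lam' (pr q.1)) * q.2.1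
      + (-(lam (pr q.1) * Q1 q.1) / pr q.1 - lam (pr q.1) * Q0 q.1 / (1 - pr q.1)
        + lam' (pr q.1) * (Q1 q.1 - Q0 q.1))) with hk_def
  have hkm : Measurable k := by
    have h1 : Measurable fun q : 𝓧 × ℝ × ℝ => pr q.1 := hprm.comp measurable_fst
    have hL : Measurable fun q : 𝓧 × ℝ × ℝ => lam (pr q.1) := hlamc.measurable.comp h1
    have hL' : Measurable fun q : 𝓧 × ℝ × ℝ => lam' (pr q.1) := hlam'.measurable.comp h1
    have hQ1' : Measurable fun q : 𝓧 × ℝ × ℝ => Q1 q.1 := hQ1m.comp measurable_fst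
    have hQ0' : Measurable fun q : 𝓧 × ℝ × ℝ => Q0 q.1 := hQ0m.comp measurable_fst
    exact ((hg.comp (hv.comp measurable_fst))).mul
      (((((hL.div h1).sub hL').mul (measurable_snd.snd)).add
        (((hL.div ((measurable_const (a := (1:ℝ))).sub h1)).add hL').mul (measurable_snd.fst))).add
          ((((hL.mul hQ1').neg.div h1).sub ((hL.mul hQ0').div ((measurable_const (a := (1:ℝ))).sub h1))).add
            (hL'.mul (hQ1'.sub hQ0'))))
  set K : Ω → ℝ := fun ω => k (Z ω) with hK_def
  set f : Ω → ℝ := fun ω => A ω - pr (X ω) with hf_def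
  have hfm : Measurable f := hA.sub (hprm.comp hX)
  have hf_int : Integrable f P := by
    refine ⟨hfm.aestronglyMeasurable, ?_⟩
    refine HasFiniteIntegral.of_bounded (C := 2) ?_
    filter_upwards with ω
    have h1 : |A ω| ≤ 1 := by rcases hA01 ω with h | h <;> simp [h]
    have h2 : |pr (X ω)| ≤ 1 := by
      have := hpr (X ω); rw [abs_of_pos this.1]; exact this.2.le
    calc ‖f ω‖ ≤ |A ω| + |pr (X ω)| := abs_sub _ _
      _ ≤ 2 := by linarith
  -- a.e. identity between the integrand and K * f
  have haeF : (fun ω => wFun lam lam' A X pr ω *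
      (phiFun lam lam' A Y X pr Q0 Q1 ω - (Y1 ω - Y0 ω)) * g (v (X ω)))
      =ᵐ[P] fun ω => K ω * f ω := by
    filter_upwards [hw] with ω hwω
    have hp := hpr (X ω)
    have hp0 : pr (X ω) ≠ 0 := ne_of_gt hp.1
    have hp1 : (1 : ℝ) - pr (X ω) ≠ 0 := (sub_pos.mpr hp.2).ne'
    have hwω' : (A ω - pr (X ω)) * lam' (pr (X ω)) + lam (pr (X ω)) ≠ 0 := hwω
    have := stmt12_alg (A ω) (pr (X ω)) (lam (pr (X ω))) (lam' (pr (X ω)))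
      (Q0 (X ω)) (Q1 (X ω)) (Y0 ω) (Y1 ω) (g (v (X ω))) (hA01 ω) hp0 hp1 hwω'
    simpa [wFun, phiFun, hYdef ω, hK_def, hk_def, hZ_def, hf_def, mul_assoc] using this
  -- measurability of K with respect to comap Z
  have hZm2 : Measurable[MeasurableSpace.comap Z inferInstance] Z :=
    measurable_iff_comap_le.mpr le_rfl
  have hKsm : StronglyMeasurable[MeasurableSpace.comap Z inferInstance] K :=
    (hkm.comp hZm2).stronglyMeasurable
  -- strong measurability of pr ∘ X with respect to comap X
  have hXm : Measurable[MeasurableSpace.comap X inferInstance] X :=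
    measurable_iff_comap_le.mpr le_rfl
  have hpXsm : StronglyMeasurable[MeasurableSpace.comap X inferInstance]
      (fun ω => pr (X ω)) := (hprm.comp hXm).stronglyMeasurable
  -- A equals the indicator of {A = 1}
  have hAind : ∀ ω, A ω = (A ⁻¹' {1}).indicator (fun _ => (1 : ℝ)) ω := by
    intro ω
    rcases hA01 ω with h | h
    · rw [Set.indicator_of_notMem (by simp [Set.mem_preimage, h]) _, h]
    · rw [Set.indicator_of_mem (by simp [Set.mem_preimage, h]) _, h]
  -- rectangle sets
  have hrect : ∀ (B : Set 𝓧) (C : Set (ℝ × ℝ)), MeasurableSet B → MeasurableSet C →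
      ∫ ω in X ⁻¹' B ∩ W ⁻¹' C, f ω ∂P = 0 := by
    intro B C hB hC
    set χ : Ω → ℝ := Set.indicator (W ⁻¹' C) (fun _ => (1 : ℝ)) with hχ_def
    have hχm : Measurable χ := measurable_const.indicator (hWm hC)
    have hχ_int : Integrable χ P := (integrable_const (1 : ℝ)).indicator (hWm hC)
    have hχbd : ∀ ω, |χ ω| ≤ 1 := by
      intro ω
      rw [hχ_def]; by_cases h : ω ∈ W ⁻¹' C <;> simp [h]
    have hχA_int : Integrable (fun ω => χ ω * A ω) P := by
      refine ⟨(hχm.mul hA).aestronglyMeasurable, ?_⟩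
      refine HasFiniteIntegral.of_bounded (C := 1) ?_
      filter_upwards with ω
      have h1 : |A ω| ≤ 1 := by rcases hA01 ω with h | h <;> simp [h]
      calc ‖χ ω * A ω‖ = |χ ω| * |A ω| := abs_mul _ _
        _ ≤ 1 * 1 := mul_le_mul (hχbd ω) h1 (abs_nonneg _) zero_le_one
        _ = 1 := one_mul 1
    have hpχ_int : Integrable ((fun ω => pr (X ω)) * χ) P := by
      refine ⟨((hprm.comp hX).mul hχm).aestronglyMeasurable, ?_⟩
      refine HasFiniteIntegral.of_bounded (C := 1) ?_
      filter_upwards with ω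
      have h1 : |pr (X ω)| ≤ 1 := by
        have := hpr (X ω); rw [abs_of_pos this.1]; exact this.2.le
      calc ‖((fun ω => pr (X ω)) * χ) ω‖ = |pr (X ω)| * |χ ω| := abs_mul _ _
        _ ≤ 1 * 1 := mul_le_mul h1 (hχbd ω) (abs_nonneg _) zero_le_one
        _ = 1 := one_mul 1
    -- step 1 : condexp of χ * A
    have hstep1 : P[fun ω => χ ω * A ω | MeasurableSpace.comap X inferInstance]
        =ᵐ[P] fun ω => (P⟦W ⁻¹' C | MeasurableSpace.comap X inferInstance⟧) ω * pr (X ω) := by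
      have hid : (fun ω => χ ω * A ω)
          = Set.indicator (W ⁻¹' C ∩ A ⁻¹' {1}) (fun _ => (1 : ℝ)) := by
        funext ω
        rw [hAind ω, hχ_def]
        by_cases h1 : ω ∈ W ⁻¹' C <;> by_cases h2 : ω ∈ A ⁻¹' {1} <;>
          simp [h1, h2, Set.indicator_of_mem, Set.indicator_of_notMem, Set.mem_inter_iff]
      have hmul := (condIndepFun_iff_condExp_inter_preimage_eq_mul
        (hm' := hX.comap_le) (μ := P) hWm hA).mp hCE C {1} hC (measurableSet_singleton 1)
      have hA1 : (P⟦A ⁻¹' {1} | MeasurableSpace.comap X inferInstance⟧)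
          =ᵐ[P] fun ω => pr (X ω) := by
        have hAe : (Set.indicator (A ⁻¹' {1}) (fun _ => (1 : ℝ))) = A := by
          funext ω; exact (hAind ω).symm
        rw [hAe]
        exact hprCE.symm
      rw [hid]
      refine hmul.trans ?_
      filter_upwards [hA1] with ω hω
      rw [hω]
    -- step 2 : condexp of pr(X) * χ
    have hstep2 : P[(fun ω => pr (X ω)) * χ | MeasurableSpace.comap X inferInstance]
        =ᵐ[P] (fun ω => pr (X ω)) * P[χ | MeasurableSpace.comap X inferInstance] :=
      condExp_mul_of_stronglyMeasurable_left hpXsm hpχ_int hχ_int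
    have hχcond : P[χ | MeasurableSpace.comap X inferInstance]
        = P⟦W ⁻¹' C | MeasurableSpace.comap X inferInstance⟧ := by rw [hχ_def]
    -- combine: condexp of χ * f is 0
    have hid2 : (fun ω => χ ω * f ω)
        = (fun ω => χ ω * A ω) - (fun ω => pr (X ω)) * χ := by
      funext ω; simp [hf_def]; ring
    have hχf_int : Integrable (fun ω => χ ω * f ω) P := by
      rw [hid2]; exact hχA_int.sub hpχ_int
    have hcond0 : P[fun ω => χ ω * f ω | MeasurableSpace.comap X inferInstance]
        =ᵐ[P] fun _ => (0 : ℝ) := by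
      rw [hid2]
      refine (condExp_sub hχA_int hpχ_int _).trans ?_
      filter_upwards [hstep1, hstep2] with ω h1 h2
      simp only [Pi.sub_apply, h1, h2, Pi.mul_apply]
      rw [hχcond]
      ring
    -- the rectangle integral
    have hBm : MeasurableSet[MeasurableSpace.comap X inferInstance] (X ⁻¹' B) := ⟨B, hB, rfl⟩
    have heq1 : ∫ ω in X ⁻¹' B ∩ W ⁻¹' C, f ω ∂P
        = ∫ ω in X ⁻¹' B, χ ω * f ω ∂P := by
      rw [← setIntegral_indicator (hWm hC)]
      refine setIntegral_congr_ae (hm _ hBm) ?_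
      filter_upwards with ω _
      rw [hχ_def]
      by_cases h : ω ∈ W ⁻¹' C <;> simp [h]
    rw [heq1, ← setIntegral_condExp hm hχf_int hBm]
    rw [setIntegral_congr_ae (hm _ hBm)
      (by filter_upwards [hcond0] with ω h; exact fun _ => h)]
    simp
  -- all comap-Z measurable sets
  have htot : ∫ ω, f ω ∂P = 0 := by
    have := hrect Set.univ Set.univ MeasurableSet.univ MeasurableSet.univ
    simpa using this
  have hAll : ∀ D : Set (𝓧 × ℝ × ℝ), MeasurableSet D → ∫ ω in Z ⁻¹' D, f ω ∂P = 0 := by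
    intro D hD
    refine MeasurableSpace.induction_on_inter
      (C := fun D _ => ∫ ω in Z ⁻¹' D, f ω ∂P = 0)
      generateFrom_prod.symm isPiSystem_prod (by simp) ?_ ?_ ?_ D hD
    · rintro t ⟨B, hB, C, hC, rfl⟩
      have hBC : Z ⁻¹' (B ×ˢ C) = X ⁻¹' B ∩ W ⁻¹' C := Set.mk_preimage_prod X W
      rw [hBC]
      exact hrect B C hB hC
    · intro t ht iht
      have h1 : Z ⁻¹' tᶜ = (Z ⁻¹' t)ᶜ := rfl
      have h2 := integral_add_compl (hZm ht) hf_int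
      rw [h1]
      rw [iht, htot] at h2
      linarith
    · intro u hdisj humeas ihu
      rw [Set.preimage_iUnion, integral_iUnion (fun i => hZm (humeas i))
        (fun i j hij => (hdisj hij).preimage Z) hf_int.integrableOn]
      simp [ihu]
  -- conclude condexp of f given comap Z is 0
  have hcondf : (fun _ => (0 : ℝ)) =ᵐ[P] P[f | MeasurableSpace.comap Z inferInstance] := by
    refine ae_eq_condExp_of_forall_setIntegral_eq hm2 hf_int
      (fun s _ _ => (integrable_const (0 : ℝ)).integrableOn)
      (fun s hs _ => ?_) stronglyMeasurable_const.aestronglyMeasurable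
    obtain ⟨D, hD, rfl⟩ := hs
    simp [hAll D hD]
  -- final computation
  rw [integral_congr_ae haeF]
  have hKf_int : Integrable (K * f) P := hI.congr haeF
  have hmul2 : P[K * f | MeasurableSpace.comap Z inferInstance]
      =ᵐ[P] K * P[f | MeasurableSpace.comap Z inferInstance] :=
    condExp_mul_of_stronglyMeasurable_left hKsm hKf_int hf_int
  have h0 : P[K * f | MeasurableSpace.comap Z inferInstance] =ᵐ[P] fun _ => (0 : ℝ) := by
    filter_upwards [hmul2, hcondf.symm] with ω h1 h2
    rw [h1, Pi.mul_apply, h2]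
    exact mul_zero _
  calc ∫ ω, K ω * f ω ∂P
      = ∫ ω, (P[K * f | MeasurableSpace.comap Z inferInstance]) ω ∂P :=
        (integral_condExp hm2).symm
    _ = 0 := by rw [integral_congr_ae h0]; simp
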